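/- Let N ≥ 1 and let Z : ℝ^N → ℝ be differentiable and strictly concave with a global maximizer h* ∈ ℝ^N. Let ε > 0, let c_1,…,c_N : ℝ → ℝ be functions with c_i(t) ≥ ε for all t, and let h : ℝ → ℝ^N be differentiable with h_i'(t) = c_i(t)·(∂Z/∂h_i)(h(t)) for each i and t. Then the function Y(t) = Z(h*) − Z(h(t)) satisfies: (a) Y(t) ≥ 0 for all t, with Y(t) = 0 if and only if h(t) = h*; (b) Y is differentiable with Y'(t) = −Σ_{i=1}^N c_i(t)·((∂Z/∂h_i)(h(t)))² ≤ −ε·‖∇Z(h(t))‖²; and (c) Y'(t) < 0 whenever h(t) ≠ h*. -/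

import Mathlib

open Set

/-- For a differentiable concave function on `EuclideanSpace`, a point with zero
gradient is a global maximizer. -/
lemma grad_zero_isMax {N : ℕ} {Z : EuclideanSpace ℝ (Fin N) → ℝ}
    (hZdiff : Differentiable ℝ Z) (hconc : ConcaveOn ℝ Set.univ Z)
    {x : EuclideanSpace ℝ (Fin N)} (hg : gradient Z x = 0)
    (y : EuclideanSpace ℝ (Fin N)) : Z y ≤ Z x := by
  set g : ℝ → ℝ := fun s => Z (AffineMap.lineMap x y s) with hgdef
  have hline : ∀ s : ℝ, HasDerivAt (fun s : ℝ => AffineMap.lineMap x y s) (y - x) s := by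
    intro s
    have he : (fun s : ℝ => (AffineMap.lineMap x y : ℝ →ᵃ[ℝ] EuclideanSpace ℝ (Fin N)) s)
        = fun s : ℝ => s • (y - x) + x := by
      funext s; exact AffineMap.lineMap_apply_module' x y s
    rw [he]
    simpa using ((hasDerivAt_id s).smul_const (y - x)).add_const x
  have hZf : HasFDerivAt Z ((InnerProductSpace.toDual ℝ _) (gradient Z x)) x :=
    hasGradientAt_iff_hasFDerivAt.mp (hZdiff x).hasGradientAt
  have hg0 : HasDerivAt g 0 0 := by
    have h0 : (AffineMap.lineMap x y : ℝ →ᵃ[ℝ] EuclideanSpace ℝ (Fin N)) 0 = x := by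
      simp
    have := (h0 ▸ hZf).comp_hasDerivAt 0 (hline 0)
    simp [hg] at this
    exact this
  have hgconc : ConcaveOn ℝ Set.univ g := by
    have := hconc.comp_affineMap (AffineMap.lineMap x y : ℝ →ᵃ[ℝ] EuclideanSpace ℝ (Fin N))
    simp [hgdef, Function.comp] at this
    exact this
  have hconv : ConvexOn ℝ Set.univ (-g) := hgconc.neg
  have hle := hconv.deriv_le_slope (Set.mem_univ (0:ℝ)) (Set.mem_univ (1:ℝ)) zero_lt_one
    (hg0.differentiableAt.neg)
  have hd : deriv (-g) 0 = 0 := by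
    have := hg0.neg.deriv
    simpa [Pi.neg_def] using this
  have hslope : slope (-g) 0 1 = g 0 - g 1 := by
    simp [slope_def_field]
    ring
  rw [hd, hslope] at hle
  have h01 : g 1 ≤ g 0 := by linarith
  simpa [hgdef] using h01

/-- Uniqueness of the maximizer of a strictly concave function. -/
lemma strictConcave_max_unique {N : ℕ} {Z : EuclideanSpace ℝ (Fin N) → ℝ}
    (hZconc : StrictConcaveOn ℝ Set.univ Z)
    {hstar x : EuclideanSpace ℝ (Fin N)}
    (hmax : ∀ y, Z y ≤ Z hstar) (hx : Z x = Z hstar) : x = hstar := by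
  by_contra hne
  have h2 := hZconc.2 (Set.mem_univ x) (Set.mem_univ hstar) hne
    (by norm_num : (0:ℝ) < 1/2) (by norm_num : (0:ℝ) < 1/2) (by norm_num)
  have := hmax ((1/2 : ℝ) • x + (1/2 : ℝ) • hstar)
  rw [hx] at h2
  simp only [smul_eq_mul] at h2
  linarith

theorem stmt_3 (N : ℕ) (hN : 1 ≤ N)
    (Z : EuclideanSpace ℝ (Fin N) → ℝ)
    (hZdiff : Differentiable ℝ Z)
    (hZconc : StrictConcaveOn ℝ Set.univ Z)
    (hstar : EuclideanSpace ℝ (Fin N))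
    (hmax : ∀ x, Z x ≤ Z hstar)
    (ε : ℝ) (hε : 0 < ε)
    (c : Fin N → ℝ → ℝ) (hc : ∀ i t, ε ≤ c i t)
    (h : ℝ → EuclideanSpace ℝ (Fin N))
    (hdiff : Differentiable ℝ h)
    (hode : ∀ i t, deriv (fun s => h s i) t = c i t * gradient Z (h t) i)
    (Y : ℝ → ℝ) (hY : Y = fun t => Z hstar - Z (h t)) :
    (∀ t, 0 ≤ Y t ∧ (Y t = 0 ↔ h t = hstar)) ∧
    (∀ t, HasDerivAt Y (-∑ i, c i t * (gradient Z (h t) i) ^ 2) t ∧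
      -∑ i, c i t * (gradient Z (h t) i) ^ 2 ≤ -(ε * ‖gradient Z (h t)‖ ^ 2)) ∧
    (∀ t, h t ≠ hstar → deriv Y t < 0) := by
  subst hY
  have hDeriv : ∀ t, HasDerivAt (fun t => Z hstar - Z (h t))
      (-∑ i, c i t * (gradient Z (h t) i) ^ 2) t := by
    intro t
    set v : EuclideanSpace ℝ (Fin N) := WithLp.toLp 2 (fun i => c i t * gradient Z (h t) i) with hv
    have hht : HasDerivAt h (deriv h t) t := (hdiff t).hasDerivAt
    have hdt : deriv h t = v := by
      ext i
      have hcomp : HasDerivAt (fun s => h s i) ((deriv h t) i) t := by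
        have := (EuclideanSpace.proj (𝕜 := ℝ) (i : Fin N)).hasFDerivAt.comp_hasDerivAt t hht
        simp at this
        exact this
      rw [← hcomp.deriv, hode i t]
    rw [hdt] at hht
    have hZf : HasFDerivAt Z
        ((InnerProductSpace.toDual ℝ _) (gradient Z (h t))) (h t) :=
      hasGradientAt_iff_hasFDerivAt.mp (hZdiff (h t)).hasGradientAt
    have hZh : HasDerivAt (fun s => Z (h s))
        (@inner ℝ _ _ (gradient Z (h t)) v) t := by
      have := hZf.comp_hasDerivAt t hht
      simp only [InnerProductSpace.toDual_apply_apply] at this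
      exact this
    have hinner : @inner ℝ _ _ (gradient Z (h t)) v
        = ∑ i, c i t * (gradient Z (h t) i) ^ 2 := by
      rw [PiLp.inner_apply]
      refine Finset.sum_congr rfl fun i _ => ?_
      simp [RCLike.inner_apply, hv]
      ring
    rw [hinner] at hZh
    simpa using (hZh.const_sub (Z hstar))
  have hnorm : ∀ t, ‖gradient Z (h t)‖ ^ 2 = ∑ i, (gradient Z (h t) i) ^ 2 := by
    intro t
    rw [← real_inner_self_eq_norm_sq, PiLp.inner_apply]
    refine Finset.sum_congr rfl fun i _ => ?_
    simp [RCLike.inner_apply]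
  refine ⟨?_, fun t => ⟨hDeriv t, ?_⟩, ?_⟩
  · intro t
    refine ⟨by simpa using sub_nonneg.mpr (hmax (h t)), ?_, ?_⟩
    · intro h0
      exact strictConcave_max_unique hZconc hmax (by simp only at h0; linarith [sub_eq_zero.mp h0])
    · intro he
      simp [he]
  · rw [neg_le_neg_iff, hnorm t, Finset.mul_sum]
    refine Finset.sum_le_sum fun i _ => ?_
    exact mul_le_mul_of_nonneg_right (hc i t) (sq_nonneg _)
  · intro t hne
    rw [(hDeriv t).deriv, neg_lt_zero]
    have hgne : gradient Z (h t) ≠ 0 := by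
      intro hg0
      have hle := grad_zero_isMax hZdiff hZconc.concaveOn hg0 hstar
      exact hne (strictConcave_max_unique hZconc hmax (le_antisymm (hmax _) hle))
    obtain ⟨i, hi⟩ : ∃ i, gradient Z (h t) i ≠ 0 := by
      by_contra hall
      push_neg at hall
      exact hgne (by ext j; simpa using hall j)
    refine Finset.sum_pos' (fun j _ => ?_) ⟨i, Finset.mem_univ i, ?_⟩
    · exact mul_nonneg (le_trans hε.le (hc j t)) (sq_nonneg _)
    · exact mul_pos (lt_of_lt_of_le hε (hc i t)) (by positivity)
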